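/- Invariance of the extended target under the i-SIR joint kernel: the kernel Q_N((y, x¹:ᴺ), d(ȳ, x̄¹:ᴺ)) = Λ_N(y, dx̄¹:ᴺ)Φ_N(x̄¹:ᴺ, dȳ) leaves invariant the measure 𝛗_N(d(y, x¹:ᴺ)) = π(dy)Λ_N(y, dx¹:ᴺ); i.e., ∫ 𝛗_N(d(y,x¹:ᴺ)) Q_N((y,x¹:ᴺ), A) = 𝛗_N(A) for all measurable A ⊆ X^{N+1}. -/

import Mathlib

open MeasureTheory ProbabilityTheory

/-- Invariance of the extended target `𝛗_N = π ⊗ Λ_N` under the i-SIR joint kernel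
`Q_N((y, x), ·) = Λ_N(y, dx̄) Φ_N(x̄, dȳ)`, given the duality identity. -/
theorem isir_joint_invariance
    {X : Type*} [MeasurableSpace X] (N : ℕ)
    (π : Measure X) [IsProbabilityMeasure π]
    (πN : Measure (Fin N → X)) [IsProbabilityMeasure πN]
    (Λ : Kernel X (Fin N → X)) [IsMarkovKernel Λ]
    (Φ : Kernel (Fin N → X) X) [IsMarkovKernel Φ]
    (hdual : π.compProd Λ = (πN.compProd Φ).map Prod.swap) :
    (π.compProd Λ).bind
        (fun p => (Λ p.1).bind (fun xb => (Φ xb).map (fun yb => (yb, xb))))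
      = π.compProd Λ := by
  classical
  set g : (Fin N → X) → Measure (X × (Fin N → X)) :=
    fun xb => (Φ xb).map (fun yb => (yb, xb)) with hg_def
  -- `g` coincides with the kernel `Φ ×ₖ id`, hence is measurable
  have hgK : g = fun xb => (Φ ×ₖ Kernel.id) xb := by
    funext xb
    rw [hg_def, Kernel.prod_apply, Kernel.id_apply, Measure.prod_dirac]
  have hg : Measurable g := by
    rw [hgK]; exact (Φ ×ₖ Kernel.id).measurable
  -- Step 1: `πN.bind g = (πN ⊗ₘ Φ).map Prod.swap`
  have h1 : πN.bind g = (πN.compProd Φ).map Prod.swap := by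
    ext s hs
    rw [Measure.bind_apply hs hg.aemeasurable,
      Measure.map_apply measurable_swap hs,
      Measure.compProd_apply (measurable_swap hs)]
    refine lintegral_congr fun xb => ?_
    rw [hg_def]
    rw [Measure.map_apply (by fun_prop) hs]
    rfl
  -- Step 2: `(π ⊗ₘ Λ).snd = π.bind Λ`, hence `π.bind Λ = πN`
  have h2 : π.bind Λ = πN := by
    have hA : (π.compProd Λ).snd = π.bind Λ := by
      ext s hs
      rw [Measure.snd_apply hs, Measure.compProd_apply (measurable_snd hs),
        Measure.bind_apply hs Λ.measurable.aemeasurable]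
      rfl
    have hB : (π.compProd Λ).snd = πN := by
      rw [hdual, Measure.snd_map_swap, Measure.fst_compProd]
    rw [← hA, hB]
  -- Step 3: the integrand is `(fun y => (Λ y).bind g) ∘ Prod.fst`, measurable via kernels
  have hmeas : Measurable fun y => (Λ y).bind g := by
    have : (fun y => (Λ y).bind g) = fun y => ((Φ ×ₖ Kernel.id) ∘ₖ Λ) y := by
      funext y
      rw [Kernel.comp_apply, hgK]
    rw [this]
    exact ((Φ ×ₖ Kernel.id) ∘ₖ Λ).measurable
  -- Step 4: `μ.bind (h ∘ fst) = (μ.map fst).bind h` with `μ.map fst = π`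
  have h4 : (π.compProd Λ).bind (fun p => (Λ p.1).bind g)
      = π.bind (fun y => (Λ y).bind g) := by
    have hm2 : Measurable fun p : X × (Fin N → X) => (Λ p.1).bind g := by
      exact hmeas.comp measurable_fst
    ext s hs
    rw [Measure.bind_apply hs hm2.aemeasurable, Measure.bind_apply hs hmeas.aemeasurable]
    have hfst : (π.compProd Λ).map Prod.fst = π := Measure.fst_compProd π Λ
    conv_rhs => rw [← hfst]
    exact (lintegral_map (by exact (Measure.measurable_coe hs).comp hmeas)
      (measurable_fst (α := X) (β := Fin N → X))).symm
  calc (π.compProd Λ).bind (fun p => (Λ p.1).bind g)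
      = π.bind (fun y => (Λ y).bind g) := h4
    _ = (π.bind Λ).bind g := (Measure.bind_bind Λ.measurable.aemeasurable hg.aemeasurable).symm
    _ = πN.bind g := by rw [h2]
    _ = (πN.compProd Φ).map Prod.swap := h1
    _ = π.compProd Λ := hdual.symm
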